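/- Assume (q), let f ∈ C¹[0,1] with f(0)=0, h := f′, and assume q̇(1) := lim_{φ→1⁻} q(φ)/(φ−1) exists and lies in (−∞, 0]. Let c* be the threshold for problem (P_c⁰⁰), let c ≥ c*, and let z be a solution of (P_c). Then the one-sided derivative ż(1) := lim_{φ→1⁻} (z(φ) − z(1))/(φ − 1) exists, and: (i) if z(1) < 0 then ż(1) = h(1) − c; (ii) if z(1) = 0 then ż(1) = ½[ h(1) − c + √( (h(1) − c)² − 4 q̇(1) ) ] when q̇(1) < 0, and ż(1) = max{0, h(1) − c} when q̇(1) = 0. -/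

import Mathlib

open Set Filter Topology MeasureTheory

noncomputable section

/-- `z` is a solution of the singular first-order ODE ż(φ) = h(φ) − c − q(φ)/z(φ)
on (0,1), negative on (0,1), and continuous on [0,1]. -/
def SolODE (h q : ℝ → ℝ) (c : ℝ) (z : ℝ → ℝ) : Prop :=
  ContinuousOn z (Icc 0 1) ∧
  (∀ φ ∈ Ioo (0:ℝ) 1, HasDerivAt z (h φ - c - q φ / z φ) φ) ∧
  (∀ φ ∈ Ioo (0:ℝ) 1, z φ < 0)

/-- Problem (P_c): the singular ODE with the left boundary condition z(0) = 0. -/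
def PC (h q : ℝ → ℝ) (c : ℝ) (z : ℝ → ℝ) : Prop :=
  SolODE h q c z ∧ z 0 = 0

/-- Problem (P_c⁰⁰): the singular ODE with the two boundary conditions z(0) = z(1) = 0. -/
def PC00 (h q : ℝ → ℝ) (c : ℝ) (z : ℝ → ℝ) : Prop :=
  PC h q c z ∧ z 1 = 0

lemma est_up {b q1' lam ε x Q e : ℝ} (hquad : lam^2 - b*lam + q1' = 0)
    (hblam : b ≤ lam) (hlam : 0 ≤ lam) (hε : 0 < ε) (hx : lam + ε ≤ x)
    (hQ : |Q - q1'| ≤ ε*(lam+ε)/4) (he : |e - b| ≤ ε/4) :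
    ε/2 ≤ x + Q/x - e := by
  have hx0 : 0 < x := lt_of_lt_of_le (by positivity) hx
  have hQ' : q1' - ε*(lam+ε)/4 ≤ Q := by
    have := abs_le.1 hQ; linarith [this.1]
  have he' : e ≤ b + ε/4 := by have := abs_le.1 he; linarith [this.2]
  have key : (ε/2) * x ≤ (x + Q/x - e) * x := by
    have hexp : (x + Q/x - e) * x = x^2 + Q - e*x := by
      field_simp
    rw [hexp]
    nlinarith [mul_nonneg (sub_nonneg.2 hx) hx0.le, sq_nonneg (x - lam),
      mul_nonneg (sub_nonneg.2 hblam) hε.le,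
      mul_nonneg (mul_nonneg hε.le (sub_nonneg.2 hx)) hx0.le,
      mul_nonneg (by linarith : (0:ℝ) ≤ ε + (x - (lam + ε))) (sub_nonneg.2 hblam),
      mul_le_mul_of_nonneg_right he' hx0.le]
  exact le_of_mul_le_mul_right key hx0

lemma est_M {b Qb x Q e : ℝ} (hQb : 0 ≤ Qb) (hQ : |Q| ≤ Qb) (he : |e - b| ≤ 1) (hx : 1 ≤ x) :
    x - (Qb + |b| + 1) ≤ x + Q/x - e := by
  have hx0 : (0:ℝ) < x := by linarith
  have h1 : -Qb ≤ Q/x := by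
    have h2 : |Q/x| ≤ Qb := by
      rw [abs_div, abs_of_pos hx0]
      calc |Q|/x ≤ |Q| := div_le_self (abs_nonneg Q) hx
        _ ≤ Qb := hQ
    linarith [neg_abs_le (Q/x), (abs_le.1 h2).1]
  have h3 : e ≤ |b| + 1 := by
    have := (abs_le.1 he).2
    have := le_abs_self b
    linarith
  linarith

lemma est_low_zero {b ε y Q e : ℝ} (hy0 : 0 < y) (hy : y ≤ b - ε)
    (hQ : Q ≤ 0) (he : b - ε/4 ≤ e) : y + Q/y - e ≤ -(3*ε/4) := by
  have hQy : Q/y ≤ 0 := div_nonpos_of_nonpos_of_nonneg hQ hy0.le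
  linarith

lemma est_low_neg {b q1' lam ε η y Q e : ℝ}
    (hquad : lam^2 - b*lam + q1' = 0) (hblam : b ≤ lam) (hq1' : q1' < 0)
    (hε : 0 < ε) (hεlam : ε < lam)
    (hη : η = min (lam - ε) (-q1' / (2*(lam + |b| + ε + 1))))
    (hy0 : 0 < y) (hy : y ≤ lam - ε)
    (hQhalf : Q ≤ q1'/2) (hQd : |Q - q1'| ≤ ε*η/4) (he : |e - b| ≤ ε/4) :
    y + Q/y - e ≤ -(min 1 (ε/2)) := by
  have habs := abs_nonneg b
  have hK0 : (0:ℝ) < lam + |b| + ε + 1 := by linarith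
  have hη0 : 0 < η := by
    rw [hη]
    apply lt_min (by linarith)
    apply div_pos (by linarith) (by linarith)
  have he1 : b - ε/4 ≤ e := by linarith [(abs_le.1 he).1]
  have he2 : e ≤ b + ε/4 := by linarith [(abs_le.1 he).2]
  have hmin1 : min 1 (ε/2) ≤ 1 := min_le_left _ _
  have hmin2 : min 1 (ε/2) ≤ ε/2 := min_le_right _ _
  rcases le_or_gt y η with hyη | hyη
  · -- tiny y : Q/y ≤ -K
    have hηK : η * (2*(lam + |b| + ε + 1)) ≤ -q1' := by
      have h1 : η ≤ -q1' / (2*(lam + |b| + ε + 1)) := hη ▸ min_le_right _ _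
      rwa [le_div_iff₀ (by linarith)] at h1
    have hQle : Q ≤ -(lam + |b| + ε + 1) * y := by
      have h2 : (lam + |b| + ε + 1) * y ≤ (lam + |b| + ε + 1) * η :=
        mul_le_mul_of_nonneg_left hyη hK0.le
      nlinarith
    have hQy : Q/y ≤ -(lam + |b| + ε + 1) := by
      rw [div_le_iff₀ hy0]
      nlinarith
    have hbneg : -|b| ≤ b := neg_abs_le b
    linarith
  · -- η < y ≤ lam - ε
    have h1 : y + q1'/y - b ≤ -ε := by
      have hrw : y + q1'/y - b = (y*y - b*y + q1')/y := by field_simp; ring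
      rw [hrw, div_le_iff₀ hy0]
      nlinarith [mul_nonneg (by linarith : (0:ℝ) ≤ lam - ε - y) (by linarith : (0:ℝ) ≤ y + lam - b),
        mul_nonneg hε.le (sub_nonneg.2 hblam)]
    have h2 : (Q - q1')/y ≤ ε/4 := by
      have ha : (Q - q1')/y ≤ (ε*η/4)/y := by
        gcongr
        linarith [(abs_le.1 hQd).2, le_abs_self (Q - q1')]
      have hb : (ε*η/4)/y ≤ (ε*η/4)/η := by
        gcongr

      have hc : (ε*η/4)/η = ε/4 := by
        field_simp
      linarith
    have hsplit : Q/y = q1'/y + (Q - q1')/y := by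
      rw [← add_div]; ring_nf
    linarith


/-- If `u A > θ` and at every point of `Ico A B` where `u` hits `θ` the derivative is
positive, then `u > θ` on all of `Ico A B`. -/
lemma persist_above {u u' : ℝ → ℝ} {A B θ : ℝ} (hAB : A < B)
    (hd : ∀ x ∈ Set.Ico A B, HasDerivAt u (u' x) x)
    (hcross : ∀ x ∈ Set.Ico A B, u x = θ → 0 < u' x)
    (hA : θ < u A) :
    ∀ x ∈ Set.Ico A B, θ < u x := by
  by_contra hcon
  push_neg at hcon
  obtain ⟨x₀, hx₀, hx₀le⟩ := hcon
  set S : Set ℝ := {x | x ∈ Set.Ico A B ∧ u x ≤ θ} with hS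
  have hne : S.Nonempty := ⟨x₀, hx₀, hx₀le⟩
  have hbdd : BddBelow S := ⟨A, fun y hy => hy.1.1⟩
  set c₁ := sInf S with hc₁
  have hc₁A : A ≤ c₁ := le_csInf hne fun y hy => hy.1.1
  have hc₁B : c₁ < B := lt_of_le_of_lt (csInf_le hbdd ⟨hx₀, hx₀le⟩) hx₀.2
  have hc₁mem : c₁ ∈ Set.Ico A B := ⟨hc₁A, hc₁B⟩
  have hucont : ContinuousAt u c₁ := (hd c₁ hc₁mem).continuousAt
  have h1 : u c₁ ≤ θ := by
    have hclos : c₁ ∈ closure S := csInf_mem_closure hne hbdd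
    have hne' : (𝓝[S] c₁).NeBot := mem_closure_iff_nhdsWithin_neBot.1 hclos
    exact le_of_tendsto (hucont.continuousWithinAt : Tendsto u (𝓝[S] c₁) (𝓝 (u c₁)))
      (eventually_nhdsWithin_of_forall fun y hy => hy.2)
  have hAc₁ : A < c₁ := by
    rcases eq_or_lt_of_le hc₁A with hh | hh
    · exact absurd (hh ▸ h1) (not_le.2 hA)
    · exact hh
  have habove : ∀ y, A ≤ y → y < c₁ → θ < u y := by
    intro y hy1 hy2
    by_contra hy
    push_neg at hy
    exact absurd (csInf_le hbdd ⟨⟨hy1, lt_trans hy2 hc₁B⟩, hy⟩) (not_le.2 hy2)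
  have h2 : θ ≤ u c₁ := by
    refine ge_of_tendsto (hucont.continuousWithinAt : Tendsto u (𝓝[<] c₁) (𝓝 (u c₁))) ?_
    filter_upwards [Ioo_mem_nhdsLT_of_mem (⟨hAc₁, le_refl c₁⟩ : c₁ ∈ Set.Ioc A c₁)] with y hy
    exact (habove y hy.1.le hy.2).le
  have huc : u c₁ = θ := le_antisymm h1 h2
  have hpos := hcross c₁ hc₁mem huc
  have hslope : Tendsto (slope u c₁) (𝓝[<] c₁) (𝓝 (u' c₁)) := by
    have hder : HasDerivWithinAt u (u' c₁) (Set.Iio c₁) c₁ :=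
      (hd c₁ hc₁mem).hasDerivWithinAt
    exact (hasDerivWithinAt_iff_tendsto_slope' (notMem_Iio_self)).1 hder
  have : u' c₁ ≤ 0 := by
    refine le_of_tendsto hslope ?_
    filter_upwards [Ioo_mem_nhdsLT_of_mem (⟨hAc₁, le_refl c₁⟩ : c₁ ∈ Set.Ioc A c₁)] with y hy
    have hnum : 0 < u y - u c₁ := by
      have := habove y hy.1.le hy.2
      rw [huc]; linarith
    have hden : y - c₁ < 0 := by linarith [hy.2]
    have : slope u c₁ y = (u y - u c₁) / (y - c₁) := by
      rw [slope_def_field]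
    rw [this]
    exact le_of_lt (div_neg_of_pos_of_neg hnum hden)
  linarith

lemma persist_below {u u' : ℝ → ℝ} {A B θ : ℝ} (hAB : A < B)
    (hd : ∀ x ∈ Set.Ico A B, HasDerivAt u (u' x) x)
    (hcross : ∀ x ∈ Set.Ico A B, u x = θ → u' x < 0)
    (hA : u A < θ) :
    ∀ x ∈ Set.Ico A B, u x < θ := by
  have := persist_above (u := fun y => -u y) (u' := fun y => -u' y) (θ := -θ) hAB
    (fun x hx => (hd x hx).neg)
    (fun x hx hux => by
      have : u x = θ := by linarith [neg_eq_iff_eq_neg.1 hux]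
      simpa using hcross x hx this)
    (by simpa using hA)
  intro x hx
  have := this x hx
  simpa using this

lemma mono_of_deriv_nonneg_Ico {v v' : ℝ → ℝ} {A B : ℝ}
    (hd : ∀ x ∈ Set.Ico A B, HasDerivAt v (v' x) x)
    (h0 : ∀ x ∈ Set.Ico A B, 0 ≤ v' x) :
    ∀ x ∈ Set.Ico A B, v A ≤ v x := by
  intro x hx
  have hsub : Set.Icc A x ⊆ Set.Ico A B := fun y hy => ⟨hy.1, lt_of_le_of_lt hy.2 hx.2⟩
  have hmono := monotoneOn_of_hasDerivWithinAt_nonneg (convex_Icc A x)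
      (fun y hy => (hd y (hsub hy)).continuousAt.continuousWithinAt)
      (fun y hy => ((hd y (hsub (interior_subset hy))).hasDerivWithinAt))
      (fun y hy => h0 y (hsub (interior_subset hy)))
  exact hmono (left_mem_Icc.2 hx.1) (right_mem_Icc.2 hx.1) hx.1

lemma anti_of_deriv_nonpos_Ico {v v' : ℝ → ℝ} {A B : ℝ}
    (hd : ∀ x ∈ Set.Ico A B, HasDerivAt v (v' x) x)
    (h0 : ∀ x ∈ Set.Ico A B, v' x ≤ 0) :
    ∀ x ∈ Set.Ico A B, v x ≤ v A := by
  intro x hx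
  have := mono_of_deriv_nonneg_Ico (v := fun y => -v y) (v' := fun y => -v' y)
    (fun y hy => (hd y hy).neg) (fun y hy => by simpa using h0 y hy) x hx
  simpa using this

lemma hasDerivAt_log_one_sub {y : ℝ} (hy : y < 1) :
    HasDerivAt (fun φ => Real.log (1 - φ)) (-(1 - y)⁻¹) y := by
  have h1 : HasDerivAt (fun φ : ℝ => 1 - φ) (-1) y := by
    simpa using (hasDerivAt_id y).const_sub 1
  have h2 := (Real.hasDerivAt_log (by linarith : (1:ℝ) - y ≠ 0)).comp y h1
  simpa [Function.comp_def] using h2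



set_option maxHeartbeats 2000000 in
/-- existence and value of the one-sided derivative ż(1) of a
solution of (P_c), c ≥ c*, when q̇(1) exists in (−∞,0]. -/
theorem stmt_16 (f h q z : ℝ → ℝ) (cstar c q1' : ℝ)
    (hq_cont : ContinuousOn q (Icc 0 1))
    (hq_pos : ∀ φ ∈ Ioo (0:ℝ) 1, 0 < q φ)
    (hq0 : q 0 = 0) (hq1 : q 1 = 0)
    (hq_lim : ∃ L : ℝ, ∀ᶠ φ in 𝓝[>] (0:ℝ), q φ / φ ≤ L)
    (hf0 : f 0 = 0)
    (hf' : ∀ x ∈ Icc (0:ℝ) 1, HasDerivWithinAt f (h x) (Icc 0 1) x)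
    (hh_cont : ContinuousOn h (Icc 0 1))
    (hq1'le : q1' ≤ 0)
    (hq1'lim : Tendsto (fun φ => q φ / (φ - 1)) (𝓝[<] (1:ℝ)) (𝓝 q1'))
    (hcstar : ∀ c' : ℝ, (∃ w : ℝ → ℝ, PC00 h q c' w) ↔ cstar ≤ c')
    (hc : cstar ≤ c)
    (hz : PC h q c z) :
    ∃ zd1 : ℝ,
      Tendsto (fun φ => (z φ - z 1) / (φ - 1)) (𝓝[<] (1:ℝ)) (𝓝 zd1) ∧
      (z 1 < 0 → zd1 = h 1 - c) ∧
      (z 1 = 0 →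
        (q1' < 0 → zd1 = (h 1 - c + Real.sqrt ((h 1 - c) ^ 2 - 4 * q1')) / 2) ∧
        (q1' = 0 → zd1 = max 0 (h 1 - c))) := by
  obtain ⟨⟨hz_cont, hz_deriv, hz_neg⟩, hz0⟩ := hz
  have hIoo_mem : Ioo (0:ℝ) 1 ∈ 𝓝[<] (1:ℝ) := by
    rw [← nhdsWithin_Ioo_eq_nhdsLT one_pos]; exact self_mem_nhdsWithin
  have hmono : 𝓝[<] (1:ℝ) ≤ 𝓝[Icc (0:ℝ) 1] 1 := by
    rw [← nhdsWithin_Ioo_eq_nhdsLT one_pos]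
    exact nhdsWithin_mono _ Ioo_subset_Icc_self
  have h1mem : (1:ℝ) ∈ Icc (0:ℝ) 1 := ⟨zero_le_one, le_refl 1⟩
  have hz_tendsto : Tendsto z (𝓝[<] (1:ℝ)) (𝓝 (z 1)) := (hz_cont 1 h1mem).mono_left hmono
  have hh_tendsto : Tendsto h (𝓝[<] (1:ℝ)) (𝓝 (h 1)) := (hh_cont 1 h1mem).mono_left hmono
  have hq_tendsto : Tendsto q (𝓝[<] (1:ℝ)) (𝓝 0) := by
    have := (hq_cont 1 h1mem).mono_left hmono
    rwa [hq1] at this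
  have hz1_le : z 1 ≤ 0 := by
    refine le_of_tendsto hz_tendsto ?_
    filter_upwards [hIoo_mem] with φ hφ
    exact (hz_neg φ hφ).le
  rcases lt_or_eq_of_le hz1_le with hz1 | hz1
  · -- CASE A : z 1 < 0
    refine ⟨h 1 - c, ?_, fun _ => rfl, fun h0 => absurd h0 (ne_of_lt hz1)⟩
    have hzne : z 1 ≠ 0 := ne_of_lt hz1
    have hdiff : DifferentiableOn ℝ z (Ioo 0 1) :=
      fun y hy => ((hz_deriv y hy).differentiableAt).differentiableWithinAt
    have htd : Tendsto (fun x => deriv z x) (𝓝[<] (1:ℝ)) (𝓝 (h 1 - c)) := by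
      have h2 : Tendsto (fun x => h x - c - q x / z x) (𝓝[<] (1:ℝ))
          (𝓝 (h 1 - c - 0 / z 1)) :=
        (hh_tendsto.sub tendsto_const_nhds).sub (hq_tendsto.div hz_tendsto hzne)
      rw [zero_div, sub_zero] at h2
      refine Tendsto.congr' ?_ h2
      filter_upwards [hIoo_mem] with y hy
      exact ((hz_deriv y hy).deriv).symm
    have hcont1 : ContinuousWithinAt z (Ioo 0 1) 1 :=
      (hz_cont 1 h1mem).mono Ioo_subset_Icc_self
    have hder := hasDerivWithinAt_Iic_of_tendsto_deriv hdiff hcont1 hIoo_mem htd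
    have hder2 : HasDerivWithinAt z (h 1 - c) (Iio 1) 1 := hder.mono Iio_subset_Iic_self
    rw [hasDerivWithinAt_iff_tendsto_slope' (notMem_Iio_self)] at hder2
    refine hder2.congr ?_
    intro y
    rw [slope_def_field]
  · -- CASE B : z 1 = 0
    have hz1' : z 1 = 0 := hz1
    set b : ℝ := h 1 - c with hb
    have hdisc : 0 ≤ b^2 - 4*q1' := by nlinarith [sq_nonneg b]
    set D : ℝ := Real.sqrt (b^2 - 4*q1') with hD
    have hD2 : D^2 = b^2 - 4*q1' := Real.sq_sqrt hdisc
    have hDnn : 0 ≤ D := Real.sqrt_nonneg _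
    have hDb : |b| ≤ D := by
      rw [← Real.sqrt_sq_eq_abs]
      exact Real.sqrt_le_sqrt (by nlinarith)
    set lam : ℝ := (b + D)/2 with hlam
    have hlam_nn : 0 ≤ lam := by
      have := neg_abs_le b; rw [hlam]; linarith
    have hquad : lam^2 - b*lam + q1' = 0 := by
      rw [hlam]; nlinarith [hD2]
    have hblam : b ≤ lam := by
      have := le_abs_self b; rw [hlam]; linarith
    set u : ℝ → ℝ := fun φ => z φ / (φ - 1) with hu
    have hu_pos : ∀ φ ∈ Ioo (0:ℝ) 1, 0 < u φ := fun φ hφ =>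
      div_pos_of_neg_of_neg (hz_neg φ hφ) (by linarith [hφ.2])
    set F : ℝ → ℝ := fun φ => (u φ + (q φ/(φ-1))/u φ - (h φ - c))/(1-φ) with hF
    have hu_deriv : ∀ φ ∈ Ioo (0:ℝ) 1, HasDerivAt u (F φ) φ := by
      intro φ hφ
      have hz0' : z φ ≠ 0 := (hz_neg φ hφ).ne
      have hφ1 : φ - 1 ≠ 0 := by intro hcc; linarith [hφ.2]
      have hd := (hz_deriv φ hφ).div ((hasDerivAt_id φ).sub_const 1) hφ1
      simp only [id_eq] at hd
      have h1φ : (1:ℝ) - φ ≠ 0 := by intro hcc; linarith [hφ.2]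
      have hred : q φ / (φ - 1) / (z φ / (φ - 1)) = q φ / z φ := by
        field_simp
      convert hd using 1
      show (z φ/(φ-1) + q φ/(φ-1)/(z φ/(φ-1)) - (h φ - c))/(1-φ)
        = ((h φ - c - q φ / z φ) * (φ - 1) - z φ * 1)/(φ-1)^2
      rw [hred]
      field_simp
      ring
      all_goals rfl
    have hQneg : ∀ φ ∈ Ioo (0:ℝ) 1, q φ / (φ - 1) < 0 := fun φ hφ =>
      div_neg_of_pos_of_neg (hq_pos φ hφ) (by linarith [hφ.2])
    have key : Tendsto u (𝓝[<] (1:ℝ)) (𝓝 lam) := by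
      rw [tendsto_order]
      constructor
      · -- lower bound: ∀ x < lam, eventually x < u φ
        intro x hx
        rcases le_or_gt x 0 with hx0 | hx0
        · filter_upwards [hIoo_mem] with φ hφ
          exact lt_of_le_of_lt hx0 (hu_pos φ hφ)
        · set ε : ℝ := (lam - x)/2 with hε_def
          have hε : 0 < ε := by rw [hε_def]; linarith
          have hεlam : ε < lam := by rw [hε_def]; linarith
          have hlamx : x < lam - ε := by rw [hε_def]; linarith
          by_contra hcon
          rw [Filter.not_eventually] at hcon
          have hIoo' : ∀ᶠ φ in 𝓝[<] (1:ℝ), φ ∈ Ioo (0:ℝ) 1 := hIoo_mem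
          have E2 : ∀ᶠ φ in 𝓝[<] (1:ℝ), |h φ - c - b| ≤ ε/4 := by
            have hmm := Metric.tendsto_nhds.1 hh_tendsto (ε/4) (by positivity)
            filter_upwards [hmm] with φ hφ
            rw [Real.dist_eq] at hφ
            have h3 : h φ - c - b = h φ - h 1 := by rw [hb]; ring
            rw [h3]; exact hφ.le
          have hest : ∃ δL : ℝ, 0 < δL ∧ ∀ᶠ φ in 𝓝[<] (1:ℝ),
              φ ∈ Ioo (0:ℝ) 1 ∧ (u φ ≤ lam - ε →
                u φ + (q φ/(φ-1))/u φ - (h φ - c) ≤ -δL) := by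
            rcases lt_or_eq_of_le hq1'le with hq1neg | hq1zero
            · -- q1' < 0
              have habs := abs_nonneg b
              have hKpos : (0:ℝ) < 2*(lam + |b| + ε + 1) := by linarith
              set η : ℝ := min (lam - ε) (-q1' / (2*(lam + |b| + ε + 1))) with hη
              have hη0 : 0 < η :=
                lt_min (by linarith) (div_pos (by linarith) hKpos)
              refine ⟨min 1 (ε/2), lt_min one_pos (by linarith), ?_⟩
              have E1' : ∀ᶠ φ in 𝓝[<] (1:ℝ), |q φ/(φ-1) - q1'| ≤ ε*η/4 := by
                have hmm := Metric.tendsto_nhds.1 hq1'lim (ε*η/4)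
                  (div_pos (mul_pos hε hη0) (by norm_num))
                filter_upwards [hmm] with φ hφ
                rw [Real.dist_eq] at hφ; exact hφ.le
              have Ehalf : ∀ᶠ φ in 𝓝[<] (1:ℝ), q φ/(φ-1) ≤ q1'/2 := by
                have hmm := Metric.tendsto_nhds.1 hq1'lim (-q1'/2) (by linarith)
                filter_upwards [hmm] with φ hφ
                rw [Real.dist_eq] at hφ
                have := (abs_lt.1 hφ).2
                linarith
              filter_upwards [hIoo', E1', Ehalf, E2] with φ h1 h2 h3 h4
              refine ⟨h1, fun hyu => ?_⟩
              exact est_low_neg hquad hblam hq1neg hε hεlam hη (hu_pos φ h1) hyu h3 h2 h4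
            · -- q1' = 0
              have hq0' : q1' = 0 := hq1zero
              have hlam0 : 0 < lam := by linarith
              have hlamb : lam = b := by
                have hz5 : lam * (lam - b) = 0 := by nlinarith [hquad]
                rcases mul_eq_zero.1 hz5 with h5 | h5
                · exact absurd h5 (ne_of_gt hlam0)
                · linarith
              refine ⟨3*ε/4, by linarith, ?_⟩
              filter_upwards [hIoo', E2] with φ h1 h4
              refine ⟨h1, fun hyu => ?_⟩
              have hQ := (hQneg φ h1).le
              have he1 : b - ε/4 ≤ h φ - c := by linarith [(abs_le.1 h4).1]
              have hyu' : u φ ≤ b - ε := by rw [← hlamb]; exact hyu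
              exact est_low_zero (hu_pos φ h1) hyu' hQ he1
          obtain ⟨δL, hδL, hev⟩ := hest
          obtain ⟨l, hl1, hG⟩ := mem_nhdsLT_iff_exists_Ioo_subset.1
            (eventually_iff.1 hev)
          obtain ⟨φ₀, hφ₀x, hφ₀mem⟩ := (hcon.and_eventually
            (Ioo_mem_nhdsLT_of_mem (⟨hl1, le_refl (1:ℝ)⟩ : (1:ℝ) ∈ Ioc l 1))).exists
          have hreg : ∀ y ∈ Ico φ₀ (1:ℝ), y ∈ Ioo (0:ℝ) 1 ∧ (u y ≤ lam - ε →
              u y + (q y/(y-1))/u y - (h y - c) ≤ -δL) := fun y hy =>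
            hG ⟨lt_of_lt_of_le hφ₀mem.1 hy.1, hy.2⟩
          have hφ₀Ioo : φ₀ ∈ Ioo (0:ℝ) 1 := (hreg φ₀ ⟨le_refl _, hφ₀mem.2⟩).1
          have hd : ∀ y ∈ Ico φ₀ (1:ℝ), HasDerivAt u (F y) y := fun y hy =>
            hu_deriv y (hreg y hy).1
          have hFneg : ∀ y ∈ Ico φ₀ (1:ℝ), u y ≤ lam - ε → F y ≤ -(δL/(1-y)) := by
            intro y hy hyu
            have h1y : 0 < 1 - y := by linarith [hy.2]
            have h6 : -(δL/(1-y)) = -δL/(1-y) := by rw [neg_div]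
            rw [h6]
            show (u y + (q y/(y-1))/u y - (h y - c))/(1-y) ≤ -δL/(1-y)
            exact (div_le_div_iff_of_pos_right h1y).2 ((hreg y hy).2 hyu)
          have hP1 : ∀ y ∈ Ico φ₀ (1:ℝ), u y < lam - ε := by
            refine persist_below hφ₀Ioo.2 hd ?_ ?_
            · intro y hy hyu
              have h1y : 0 < 1 - y := by linarith [hy.2]
              have h7 := hFneg y hy (le_of_eq hyu)
              have h5 : 0 < δL/(1-y) := div_pos hδL h1y
              linarith
            · exact lt_of_le_of_lt (not_lt.1 hφ₀x) hlamx
          set w : ℝ → ℝ := fun φ => u φ - δL * Real.log (1-φ) with hw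
          have hwd : ∀ y ∈ Ico φ₀ (1:ℝ), HasDerivAt w (F y - δL * (-(1-y)⁻¹)) y :=
            fun y hy => (hd y hy).sub ((hasDerivAt_log_one_sub hy.2).const_mul δL)
          have hwnp : ∀ y ∈ Ico φ₀ (1:ℝ), F y - δL * (-(1-y)⁻¹) ≤ 0 := by
            intro y hy
            have h1y : 0 < 1 - y := by linarith [hy.2]
            have h2 := hFneg y hy (hP1 y hy).le
            have h3 : δL * (-(1-y)⁻¹) = -(δL/(1-y)) := by rw [div_eq_mul_inv]; ring
            rw [h3]
            linarith
          have hwanti := anti_of_deriv_nonpos_Ico hwd hwnp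
          set r : ℝ := min (1-φ₀) (Real.exp (-(w φ₀ + 1) / δL)) with hr
          have hr0 : 0 < r := lt_min (by linarith [hφ₀Ioo.2]) (Real.exp_pos _)
          have hrle : r ≤ 1 - φ₀ := min_le_left _ _
          set φ₃ : ℝ := 1 - r/2 with hφ₃
          have h1φ₃ : 1 - φ₃ = r/2 := by rw [hφ₃]; ring
          have hφ₃mem : φ₃ ∈ Ico φ₀ (1:ℝ) :=
            ⟨by rw [hφ₃]; linarith, by rw [hφ₃]; linarith⟩
          have hlogr : Real.log r ≤ -(w φ₀ + 1) / δL := by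
            rw [Real.log_le_iff_le_exp hr0]; exact min_le_right _ _
          have hlogr2 : Real.log (r/2) ≤ Real.log r :=
            Real.log_le_log (by linarith) (by linarith)
          have hu3 : u φ₃ ≤ -1 := by
            have h1 := hwanti φ₃ hφ₃mem
            have h2 : w φ₃ = u φ₃ - δL * Real.log (r/2) := by
              have h8 : w φ₃ = u φ₃ - δL * Real.log (1 - φ₃) := rfl
              rw [h8, h1φ₃]
            have h3 : -(δL * Real.log r) ≤ -(δL * Real.log (r/2)) := by
              have := mul_le_mul_of_nonneg_left hlogr2 hδL.le
              linarith
            have h5 : δL * Real.log r ≤ δL * (-(w φ₀ + 1) / δL) :=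
              mul_le_mul_of_nonneg_left hlogr hδL.le
            have h4 : δL * (-(w φ₀ + 1) / δL) = -(w φ₀ + 1) := by
              field_simp
            rw [h2] at h1
            linarith
          have := hu_pos φ₃ (hreg φ₃ hφ₃mem).1
          linarith
      · -- upper bound: ∀ x > lam, eventually u φ < x
        intro x hx
        set ε : ℝ := (x - lam)/2 with hε_def
        have hε : 0 < ε := by rw [hε_def]; linarith
        have hxval : x = lam + 2*ε := by rw [hε_def]; ring
        by_contra hcon
        rw [Filter.not_eventually] at hcon
        have habs := abs_nonneg b
        have habsq := abs_nonneg q1'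
        have E1 : ∀ᶠ φ in 𝓝[<] (1:ℝ), |q φ/(φ-1) - q1'| < ε*(lam+ε)/4 := by
          have hmm := Metric.tendsto_nhds.1 hq1'lim (ε*(lam+ε)/4)
            (div_pos (mul_pos hε (by linarith)) (by norm_num))
          filter_upwards [hmm] with φ hφ
          rwa [Real.dist_eq] at hφ
        have EQb : ∀ᶠ φ in 𝓝[<] (1:ℝ), |q φ/(φ-1)| < |q1'| + 1 := by
          have h1 := Metric.tendsto_nhds.1 hq1'lim 1 one_pos
          filter_upwards [h1] with φ hφ
          rw [Real.dist_eq] at hφ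
          calc |q φ/(φ-1)| = |(q φ/(φ-1) - q1') + q1'| := by ring_nf
            _ ≤ |q φ/(φ-1) - q1'| + |q1'| := abs_add_le _ _
            _ < |q1'| + 1 := by linarith
        have E2 : ∀ᶠ φ in 𝓝[<] (1:ℝ), |h φ - c - b| ≤ min (ε/4) 1 := by
          have hmm := Metric.tendsto_nhds.1 hh_tendsto (min (ε/4) 1)
            (lt_min (by linarith) one_pos)
          filter_upwards [hmm] with φ hφ
          rw [Real.dist_eq] at hφ
          have h3 : h φ - c - b = h φ - h 1 := by rw [hb]; ring
          rw [h3]; exact hφ.le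
        have hIoo' : ∀ᶠ φ in 𝓝[<] (1:ℝ), φ ∈ Ioo (0:ℝ) 1 := hIoo_mem
        obtain ⟨l, hl1, hG⟩ := mem_nhdsLT_iff_exists_Ioo_subset.1
          (eventually_iff.1 ((E1.and EQb).and (E2.and hIoo')))
        obtain ⟨φ₀, hφ₀x, hφ₀mem⟩ := (hcon.and_eventually
          (Ioo_mem_nhdsLT_of_mem (⟨hl1, le_refl (1:ℝ)⟩ : (1:ℝ) ∈ Ioc l 1))).exists
        have hreg : ∀ y ∈ Ico φ₀ (1:ℝ),
            (|q y/(y-1) - q1'| < ε*(lam+ε)/4 ∧ |q y/(y-1)| < |q1'| + 1) ∧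
            (|h y - c - b| ≤ min (ε/4) 1 ∧ y ∈ Ioo (0:ℝ) 1) := fun y hy =>
          hG ⟨lt_of_lt_of_le hφ₀mem.1 hy.1, hy.2⟩
        have hφ₀Ioo : φ₀ ∈ Ioo (0:ℝ) 1 := (hreg φ₀ ⟨le_refl _, hφ₀mem.2⟩).2.2
        have hd : ∀ y ∈ Ico φ₀ (1:ℝ), HasDerivAt u (F y) y := fun y hy =>
          hu_deriv y (hreg y hy).2.2
        have he_b : ∀ y ∈ Ico φ₀ (1:ℝ), |h y - c - b| ≤ ε/4 := fun y hy =>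
          le_trans (hreg y hy).2.1 (min_le_left _ _)
        have he_1 : ∀ y ∈ Ico φ₀ (1:ℝ), |h y - c - b| ≤ 1 := fun y hy =>
          le_trans (hreg y hy).2.1 (min_le_right _ _)
        have hNlow : ∀ y ∈ Ico φ₀ (1:ℝ), lam + ε ≤ u y →
            ε/2 ≤ u y + (q y/(y-1))/u y - (h y - c) := fun y hy hyu =>
          est_up hquad hblam hlam_nn hε hyu (le_of_lt (hreg y hy).1.1) (he_b y hy)
        have hFpos : ∀ y ∈ Ico φ₀ (1:ℝ), lam + ε ≤ u y → (ε/2)/(1-y) ≤ F y := by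
          intro y hy hyu
          have h1y : 0 < 1 - y := by linarith [hy.2]
          show (ε/2)/(1-y) ≤ (u y + (q y/(y-1))/u y - (h y - c))/(1-y)
          exact (div_le_div_iff_of_pos_right h1y).2 (hNlow y hy hyu)
        have hP1 : ∀ y ∈ Ico φ₀ (1:ℝ), lam + ε < u y := by
          refine persist_above hφ₀Ioo.2 hd ?_ ?_
          · intro y hy hyu
            have h1y : 0 < 1 - y := by linarith [hy.2]
            have h7 := hFpos y hy (le_of_eq hyu.symm)
            have hp : 0 < (ε/2)/(1-y) := div_pos (by linarith) h1y
            linarith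
          · have h8 : x ≤ u φ₀ := not_lt.1 hφ₀x
            rw [hxval] at h8; linarith
        set w : ℝ → ℝ := fun φ => u φ + (ε/2) * Real.log (1-φ) with hw
        have hwd : ∀ y ∈ Ico φ₀ (1:ℝ), HasDerivAt w (F y + (ε/2) * (-(1-y)⁻¹)) y :=
          fun y hy => (hd y hy).add ((hasDerivAt_log_one_sub hy.2).const_mul (ε/2))
        have hwnn : ∀ y ∈ Ico φ₀ (1:ℝ), 0 ≤ F y + (ε/2) * (-(1-y)⁻¹) := by
          intro y hy
          have h1y : 0 < 1 - y := by linarith [hy.2]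
          have h2 := hFpos y hy (hP1 y hy).le
          have h3 : (ε/2) * (-(1-y)⁻¹) = -((ε/2)/(1-y)) := by
            rw [div_eq_mul_inv]; ring
          rw [h3]; linarith
        have hwmono := mono_of_deriv_nonneg_Ico hwd hwnn
        set M' : ℝ := |q1'| + 1 + |b| + 1 with hM'
        set M : ℝ := M' + lam + ε + 2 with hM
        have hM'0 : 0 ≤ M' := by linarith
        have hM1 : 1 ≤ M := by linarith
        have hNM : ∀ y ∈ Ico φ₀ (1:ℝ), M ≤ u y →
            u y - M' ≤ u y + (q y/(y-1))/u y - (h y - c) := by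
          intro y hy hyu
          have h9 := est_M (b := b) (Qb := |q1'|+1) (by linarith)
            (le_of_lt (hreg y hy).1.2) (he_1 y hy) (le_trans hM1 hyu)
          linarith
        set r : ℝ := min (1-φ₀) (Real.exp (-(M + 1 - w φ₀) / (ε/2))) with hr
        have hr0 : 0 < r := lt_min (by linarith [hφ₀Ioo.2]) (Real.exp_pos _)
        have hrle : r ≤ 1 - φ₀ := min_le_left _ _
        set φ₂ : ℝ := 1 - r/2 with hφ₂
        have h1φ₂ : 1 - φ₂ = r/2 := by rw [hφ₂]; ring
        have hφ₂mem : φ₂ ∈ Ico φ₀ (1:ℝ) :=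
          ⟨by rw [hφ₂]; linarith, by rw [hφ₂]; linarith⟩
        have hlogr : Real.log r ≤ -(M + 1 - w φ₀) / (ε/2) := by
          rw [Real.log_le_iff_le_exp hr0]; exact min_le_right _ _
        have hlogr2 : Real.log (r/2) ≤ Real.log r :=
          Real.log_le_log (by linarith) (by linarith)
        have hu2 : M + 1 ≤ u φ₂ := by
          have h1 := hwmono φ₂ hφ₂mem
          have h2 : w φ₂ = u φ₂ + (ε/2) * Real.log (r/2) := by
            have h8 : w φ₂ = u φ₂ + (ε/2) * Real.log (1 - φ₂) := rfl
            rw [h8, h1φ₂]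
          have h3 : (ε/2) * Real.log (r/2) ≤ (ε/2) * Real.log r :=
            mul_le_mul_of_nonneg_left hlogr2 (by linarith)
          have h5 : (ε/2) * Real.log r ≤ (ε/2) * (-(M + 1 - w φ₀) / (ε/2)) :=
            mul_le_mul_of_nonneg_left hlogr (by linarith)
          have h4 : (ε/2) * (-(M + 1 - w φ₀) / (ε/2)) = -(M + 1 - w φ₀) := by
            field_simp
          rw [h2] at h1
          linarith
        have hsub23 : Ico φ₂ (1:ℝ) ⊆ Ico φ₀ (1:ℝ) := fun y hy =>
          ⟨le_trans hφ₂mem.1 hy.1, hy.2⟩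
        have hφ₂1 : φ₂ < 1 := hφ₂mem.2
        have hP3 : ∀ y ∈ Ico φ₂ (1:ℝ), M < u y := by
          refine persist_above hφ₂1 (fun y hy => hd y (hsub23 hy)) ?_ ?_
          · intro y hy hyu
            have h1y : 0 < 1 - y := by linarith [hy.2]
            have hN := hNM y (hsub23 hy) (le_of_eq hyu.symm)
            have hNpos : 0 < u y + (q y/(y-1))/u y - (h y - c) := by
              rw [hyu] at hN ⊢; linarith
            show 0 < (u y + (q y/(y-1))/u y - (h y - c))/(1-y)
            exact div_pos hNpos h1y
          · linarith
        set v : ℝ → ℝ := fun φ => (u φ - M') * (1 - φ) with hv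
        have hvd : ∀ y ∈ Ico φ₂ (1:ℝ),
            HasDerivAt v (F y * (1-y) + (u y - M') * (-1)) y := fun y hy =>
          ((hd y (hsub23 hy)).sub_const M').mul ((hasDerivAt_id y).const_sub 1)
        have hvnn : ∀ y ∈ Ico φ₂ (1:ℝ), 0 ≤ F y * (1-y) + (u y - M') * (-1) := by
          intro y hy
          have h1y : 0 < 1 - y := by linarith [hy.2]
          have hN := hNM y (hsub23 hy) (hP3 y hy).le
          have hFN : F y * (1-y) = u y + (q y/(y-1))/u y - (h y - c) := by
            show ((u y + (q y/(y-1))/u y - (h y - c))/(1-y)) * (1-y) = _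
            field_simp
          rw [hFN]; linarith
        have hvmono := mono_of_deriv_nonneg_Ico hvd hvnn
        have hκ : 0 < v φ₂ := by
          have h8 : v φ₂ = (u φ₂ - M') * (1 - φ₂) := rfl
          rw [h8, h1φ₂]
          exact mul_pos (by linarith) (by linarith)
        have hzneg2 : ∀ y ∈ Ico φ₂ (1:ℝ), z y ≤ -(v φ₂) := by
          intro y hy
          have h1y : 0 < 1 - y := by linarith [hy.2]
          have hvy := hvmono y hy
          have hyne : y - 1 ≠ 0 := by intro hcc; linarith
          have hzy : u y * (y-1) = z y := div_mul_cancel₀ _ hyne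
          have hvyval : v y = (u y - M') * (1 - y) := rfl
          have hM'y : 0 ≤ M' * (1 - y) := mul_nonneg hM'0 h1y.le
          have h9 : z y = -(v y) - M' * (1-y) := by rw [hvyval, ← hzy]; ring
          linarith
        have hfinal : z 1 ≤ -(v φ₂) := by
          refine le_of_tendsto hz_tendsto ?_
          filter_upwards [Ioo_mem_nhdsLT_of_mem
            (⟨hφ₂1, le_refl (1:ℝ)⟩ : (1:ℝ) ∈ Ioc φ₂ 1)] with y hy
          exact hzneg2 y ⟨hy.1.le, hy.2⟩
        rw [hz1'] at hfinal
        linarith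
    refine ⟨lam, ?_, fun hlt => absurd hz1' (ne_of_lt hlt), fun _ => ⟨fun _ => rfl, ?_⟩⟩
    · refine key.congr' ?_
      filter_upwards [hIoo_mem] with φ hφ
      rw [hz1', sub_zero]
    · intro hq0'
      rw [hlam, hD, hq0']
      have : b^2 - 4*0 = b^2 := by ring
      rw [this, Real.sqrt_sq_eq_abs]
      rcases le_total b 0 with hb0 | hb0
      · rw [abs_of_nonpos hb0, max_eq_left (by linarith [hb0] : b ≤ 0)]
        ring_nf
      · rw [abs_of_nonneg hb0, max_eq_right hb0]
        ring
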